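/- Let p ≥ 1, let Σ₀ ∈ ℝ^{p×p} be symmetric positive definite with inverse Ω₀ = Σ₀⁻¹, let Σ' ∈ ℝ^{p×p} and λ ≥ 0 satisfy ‖Ω₀‖_{L1} · |Σ' − Σ₀|_∞ ≤ λ and pλ < 1. Suppose Ω̂¹ ∈ ℝ^{p×p} satisfies |Σ'Ω̂¹ − I|_∞ ≤ λ. Then ‖Ω̂¹‖_{L1} ≤ ((1 + 3pλ)/(1 − pλ)) · ‖Ω₀‖_{L1}. -/

import Mathlib

open Matrix

/-- Elementwise ℓ∞ norm of a matrix: `max_{i,j} |A i j|`. -/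
noncomputable def matInf {p : ℕ} (A : Matrix (Fin p) (Fin p) ℝ) : ℝ :=
  ⨆ i, ⨆ j, |A i j|

/-- Matrix L₁ norm: maximum absolute column sum. -/
noncomputable def matL1 {p : ℕ} (A : Matrix (Fin p) (Fin p) ℝ) : ℝ :=
  ⨆ j, ∑ i, |A i j|

lemma abs_le_matInf {p : ℕ} (A : Matrix (Fin p) (Fin p) ℝ) (i j : Fin p) :
    |A i j| ≤ matInf A :=
  le_trans (le_ciSup (f := fun j => |A i j|) (Set.Finite.bddAbove (Set.finite_range _)) j)
    (le_ciSup (f := fun i => ⨆ j, |A i j|) (Set.Finite.bddAbove (Set.finite_range _)) i)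

lemma colsum_le_matL1 {p : ℕ} (A : Matrix (Fin p) (Fin p) ℝ) (j : Fin p) :
    ∑ i, |A i j| ≤ matL1 A :=
  le_ciSup (f := fun j => ∑ i, |A i j|) (Set.Finite.bddAbove (Set.finite_range _)) j

lemma matL1_nonneg {p : ℕ} (hp : 1 ≤ p) (A : Matrix (Fin p) (Fin p) ℝ) :
    0 ≤ matL1 A := by
  have j : Fin p := ⟨0, hp⟩
  exact le_trans (Finset.sum_nonneg fun i _ => abs_nonneg _) (colsum_le_matL1 A j)

lemma matInf_nonneg {p : ℕ} (hp : 1 ≤ p) (A : Matrix (Fin p) (Fin p) ℝ) :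
    0 ≤ matInf A := by
  have j : Fin p := ⟨0, hp⟩
  exact le_trans (abs_nonneg _) (abs_le_matInf A j j)

lemma matL1_le {p : ℕ} (hp : 1 ≤ p) (A : Matrix (Fin p) (Fin p) ℝ) (c : ℝ)
    (h : ∀ j, ∑ i, |A i j| ≤ c) : matL1 A ≤ c := by
  haveI : Nonempty (Fin p) := ⟨⟨0, hp⟩⟩
  exact ciSup_le h

lemma matL1_add_le {p : ℕ} (hp : 1 ≤ p) (A B : Matrix (Fin p) (Fin p) ℝ) :
    matL1 (A + B) ≤ matL1 A + matL1 B := by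
  refine matL1_le hp _ _ fun j => ?_
  calc ∑ i, |(A + B) i j| ≤ ∑ i, (|A i j| + |B i j|) :=
        Finset.sum_le_sum fun i _ => abs_add_le _ _
    _ = (∑ i, |A i j|) + ∑ i, |B i j| := Finset.sum_add_distrib
    _ ≤ matL1 A + matL1 B := add_le_add (colsum_le_matL1 A j) (colsum_le_matL1 B j)

lemma matL1_sub_le {p : ℕ} (hp : 1 ≤ p) (A B : Matrix (Fin p) (Fin p) ℝ) :
    matL1 (A - B) ≤ matL1 A + matL1 B := by
  have : matL1 (A - B) = matL1 (A + (-B)) := by rw [sub_eq_add_neg]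
  rw [this]
  have hneg : matL1 (-B) = matL1 B := by
    unfold matL1; congr 1; funext j; congr 1; funext i; simp
  calc matL1 (A + (-B)) ≤ matL1 A + matL1 (-B) := matL1_add_le hp A (-B)
    _ = matL1 A + matL1 B := by rw [hneg]

lemma matL1_mul_colsum {p : ℕ} (A B : Matrix (Fin p) (Fin p) ℝ) (j : Fin p) :
    ∑ i, |(A * B) i j| ≤ ∑ k, (∑ i, |A i k|) * |B k j| := by
  calc ∑ i, |(A * B) i j| = ∑ i, |∑ k, A i k * B k j| := by
        simp [Matrix.mul_apply]
    _ ≤ ∑ i, ∑ k, |A i k * B k j| :=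
        Finset.sum_le_sum fun i _ => Finset.abs_sum_le_sum_abs _ _
    _ = ∑ k, ∑ i, |A i k| * |B k j| := by
        rw [Finset.sum_comm]; simp [abs_mul]
    _ = ∑ k, (∑ i, |A i k|) * |B k j| := by
        congr 1; funext k; rw [Finset.sum_mul]

lemma matL1_mul_le_inf {p : ℕ} (hp : 1 ≤ p) (A B : Matrix (Fin p) (Fin p) ℝ) :
    matL1 (A * B) ≤ (p : ℝ) * (matL1 A * matInf B) := by
  refine matL1_le hp _ _ fun j => ?_
  calc ∑ i, |(A * B) i j| ≤ ∑ k, (∑ i, |A i k|) * |B k j| := matL1_mul_colsum A B j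
    _ ≤ ∑ _k : Fin p, matL1 A * matInf B :=
        Finset.sum_le_sum fun k _ => mul_le_mul (colsum_le_matL1 A k)
          (abs_le_matInf B k j) (abs_nonneg _) (matL1_nonneg hp A)
    _ = (p : ℝ) * (matL1 A * matInf B) := by simp [mul_comm]

lemma matL1_mul_le {p : ℕ} (hp : 1 ≤ p) (A B : Matrix (Fin p) (Fin p) ℝ) :
    matL1 (A * B) ≤ matL1 A * matL1 B := by
  refine matL1_le hp _ _ fun j => ?_
  calc ∑ i, |(A * B) i j| ≤ ∑ k, (∑ i, |A i k|) * |B k j| := matL1_mul_colsum A B j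
    _ ≤ ∑ k, matL1 A * |B k j| :=
        Finset.sum_le_sum fun k _ => mul_le_mul_of_nonneg_right
          (colsum_le_matL1 A k) (abs_nonneg _)
    _ = matL1 A * ∑ k, |B k j| := by rw [Finset.mul_sum]
    _ ≤ matL1 A * matL1 B :=
        mul_le_mul_of_nonneg_left (colsum_le_matL1 B j) (matL1_nonneg hp A)

/-- L₁-operator-norm bound for any matrix satisfying the stopping criterion. -/
theorem stmt8 {p : ℕ} (hp : 1 ≤ p)
    (S₀ : Matrix (Fin p) (Fin p) ℝ) (hSsym : S₀.IsSymm) (hSpd : S₀.PosDef)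
    (Ω₀ : Matrix (Fin p) (Fin p) ℝ) (hΩ : Ω₀ = S₀⁻¹)
    (S' : Matrix (Fin p) (Fin p) ℝ) (lam : ℝ) (hlam : 0 ≤ lam)
    (hlow : matL1 Ω₀ * matInf (S' - S₀) ≤ lam) (hhigh : (p : ℝ) * lam < 1)
    (Ωhat1 : Matrix (Fin p) (Fin p) ℝ)
    (hstop : matInf (S' * Ωhat1 - 1) ≤ lam) :
    matL1 Ωhat1 ≤ ((1 + 3 * (p : ℝ) * lam) / (1 - (p : ℝ) * lam)) * matL1 Ω₀ := by
  set M := Ωhat1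
  have hinv : Ω₀ * S₀ = 1 := by
    rw [hΩ]
    exact Matrix.nonsing_inv_mul S₀ hSpd.det_pos.ne'.isUnit
  have hid : M = (Ω₀ * (S' * M - 1) + Ω₀) - (Ω₀ * (S' - S₀)) * M := by
    have : (Ω₀ * (S' * M - 1) + Ω₀) - (Ω₀ * (S' - S₀)) * M = (Ω₀ * S₀) * M := by
      noncomm_ring
    rw [this, hinv, one_mul]
  -- bounds
  have hppos : (0:ℝ) ≤ (p:ℝ) := Nat.cast_nonneg p
  have hΩnn : 0 ≤ matL1 Ω₀ := matL1_nonneg hp Ω₀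
  have hMnn : 0 ≤ matL1 M := matL1_nonneg hp M
  have hb1 : matL1 (Ω₀ * (S' * M - 1)) ≤ (p : ℝ) * lam * matL1 Ω₀ := by
    calc matL1 (Ω₀ * (S' * M - 1)) ≤ (p:ℝ) * (matL1 Ω₀ * matInf (S' * M - 1)) :=
          matL1_mul_le_inf hp _ _
      _ ≤ (p:ℝ) * (matL1 Ω₀ * lam) := by
          apply mul_le_mul_of_nonneg_left _ hppos
          exact mul_le_mul_of_nonneg_left hstop hΩnn
      _ = (p:ℝ) * lam * matL1 Ω₀ := by ring
  have hb2 : matL1 ((Ω₀ * (S' - S₀)) * M) ≤ (p : ℝ) * lam * matL1 M := by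
    calc matL1 ((Ω₀ * (S' - S₀)) * M) ≤ matL1 (Ω₀ * (S' - S₀)) * matL1 M :=
          matL1_mul_le hp _ _
      _ ≤ ((p:ℝ) * (matL1 Ω₀ * matInf (S' - S₀))) * matL1 M :=
          mul_le_mul_of_nonneg_right (matL1_mul_le_inf hp _ _) hMnn
      _ ≤ ((p:ℝ) * lam) * matL1 M := by
          apply mul_le_mul_of_nonneg_right _ hMnn
          exact mul_le_mul_of_nonneg_left hlow hppos
      _ = (p:ℝ) * lam * matL1 M := by ring
  have hmain : matL1 M ≤ (p:ℝ) * lam * matL1 Ω₀ + matL1 Ω₀ + (p:ℝ) * lam * matL1 M := by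
    calc matL1 M = matL1 ((Ω₀ * (S' * M - 1) + Ω₀) - (Ω₀ * (S' - S₀)) * M) := by
          rw [← hid]
      _ ≤ matL1 (Ω₀ * (S' * M - 1) + Ω₀) + matL1 ((Ω₀ * (S' - S₀)) * M) :=
          matL1_sub_le hp _ _
      _ ≤ (matL1 (Ω₀ * (S' * M - 1)) + matL1 Ω₀) + matL1 ((Ω₀ * (S' - S₀)) * M) :=
          add_le_add (matL1_add_le hp _ _) le_rfl
      _ ≤ ((p:ℝ) * lam * matL1 Ω₀ + matL1 Ω₀) + (p:ℝ) * lam * matL1 M :=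
          add_le_add (add_le_add hb1 le_rfl) hb2
  have hden : 0 < 1 - (p:ℝ) * lam := by linarith
  rw [div_mul_eq_mul_div, le_div_iff₀ hden]
  nlinarith [mul_nonneg hppos hlam]
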